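/- Let G = (F ∪ C, E) be a finite bipartite graph with F nonempty, and let I ⊆ F be a random independent set in the facility graph G_F obtained by selecting each facility i whenever its i.i.d. uniform random value exceeds those of all its G_F-neighbors. Let X = Σ_{i ∈ I} deg(i) be the number of clients removed (each client adjacent to a selected facility is counted once, which is well-defined since I is independent in G_F). Then E[X] = Σ_{i ∈ F} deg(i)/(deg_F(i)+1) ≥ |E|/|F|. -/

import Mathlib

open MeasureTheory ProbabilityTheory Finset
open scoped Classical ENNReal

/-- `i'` is a neighbor of `i` in the facility graph `G_F`. -/
def facNbr {F C : Type*} (A : F → C → Prop) (i i' : F) : Prop :=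
  i' ≠ i ∧ ∃ j, A i j ∧ A i' j

/-- Degree of facility `i` in the facility graph `G_F`. -/
noncomputable def degGF {F C : Type*} [Fintype F] (A : F → C → Prop) (i : F) : ℕ :=
  (Finset.univ.filter (fun i' => facNbr A i i')).card

/-- Degree of facility `i` in the bipartite graph `G`. -/
noncomputable def degFac {F C : Type*} [Fintype C] (A : F → C → Prop) (i : F) : ℕ :=
  (Finset.univ.filter (fun j => A i j)).card

/-- Facility `i` is selected in outcome `ω` iff its random value strictly exceeds
those of all its `G_F`-neighbors. -/
def selected {F C Ω : Type*} (A : F → C → Prop) (r : F → Ω → ℝ) (i : F) (ω : Ω) : Prop :=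
  ∀ i', facNbr A i i' → r i' ω < r i ω

/-- The expected number `E[X]` of clients removed in one iteration (where
`X = Σ_{i ∈ I} deg(i)` for the random independent set `I` chosen by the
max-random-value rule) equals `Σ_{i ∈ F} deg(i)/(deg_F(i)+1)`, which is at least
`|E|/|F|`. -/
lemma myIndep_comp_right {ι κ Ω : Type*} [MeasurableSpace Ω] {μ : Measure Ω} {f : ι → Ω → ℝ}
    (h : iIndepFun f μ) {g : κ → ι} (hg : Function.Injective g) :
    iIndepFun (fun k => f (g k)) μ := by
  rw [iIndepFun_iff_measure_inter_preimage_eq_mul] at h ⊢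
  intro S sets hsets
  set sets' : ι → Set ℝ := Function.extend g sets (fun _ => Set.univ) with hdef
  have hext : ∀ k, sets' (g k) = sets k := fun k => hg.extend_apply _ _ _
  have h1 : (⋂ k ∈ S, f (g k) ⁻¹' sets k) = ⋂ i ∈ S.image g, f i ⁻¹' sets' i := by
    ext ω
    simp only [Set.mem_iInter, Finset.mem_image]
    constructor
    · rintro H i ⟨k, hk, rfl⟩
      rw [hext]; exact H k hk
    · intro H k hk
      have := H (g k) ⟨k, hk, rfl⟩
      rwa [hext] at this
  have h2 : ∀ i ∈ S.image g, MeasurableSet (sets' i) := by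
    intro i hi
    obtain ⟨k, hk, rfl⟩ := Finset.mem_image.mp hi
    rw [hext]; exact hsets k hk
  rw [h1, h (S.image g) h2, Finset.prod_image (fun x _ y _ hxy => hg hxy)]
  exact Finset.prod_congr rfl fun k _ => by rw [hext]

lemma myMapPi {ι Ω : Type*} [Fintype ι] [MeasurableSpace Ω] (μ : Measure Ω)
    [IsProbabilityMeasure μ] (f : ι → Ω → ℝ) (hmeas : ∀ j, Measurable (f j))
    (hindep : iIndepFun f μ) :
    μ.map (fun ω (j : ι) => f j ω) = Measure.pi (fun j => μ.map (f j)) := by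
  haveI : ∀ j, IsProbabilityMeasure (μ.map (f j)) :=
    fun j => Measure.isProbabilityMeasure_map (hmeas j).aemeasurable
  haveI : ∀ j, SigmaFinite (μ.map (f j)) := fun j => inferInstance
  refine (Measure.pi_eq fun s hs => ?_).symm
  rw [Measure.map_apply (measurable_pi_lambda _ hmeas) (MeasurableSet.univ_pi hs)]
  have h1 : (fun ω (j : ι) => f j ω) ⁻¹' Set.pi Set.univ s = ⋂ j ∈ Finset.univ, f j ⁻¹' s j := by
    ext ω; simp [Set.mem_pi]
  rw [h1, hindep.measure_inter_preimage_eq_mul Finset.univ (fun j _ => hs j)]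
  exact Finset.prod_congr rfl fun j _ => (Measure.map_apply (hmeas j) (hs j)).symm

lemma myMaxProb {ι Ω : Type*} [Fintype ι] [Nonempty ι] [MeasurableSpace Ω] (μ : Measure Ω)
    [IsProbabilityMeasure μ] (f : ι → Ω → ℝ) (hmeas : ∀ j, Measurable (f j))
    (hindep : iIndepFun f μ)
    (hid : ∀ j j', μ.map (f j) = μ.map (f j'))
    (hdist : ∀ j j', j ≠ j' → μ {ω | f j ω = f j' ω} = 0) (k : ι) :
    μ {ω | ∀ j, j ≠ k → f j ω < f k ω} = (Fintype.card ι : ℝ≥0∞)⁻¹ := by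
  set T : ι → Set (ι → ℝ) := fun k => {x | ∀ j, j ≠ k → x j < x k} with hT
  have hTmeas : ∀ k, MeasurableSet (T k) := by
    intro k
    have : T k = ⋂ j, ⋂ (_ : j ≠ k), {x : ι → ℝ | x j < x k} := by
      ext x; simp [hT]
    rw [this]
    exact MeasurableSet.iInter fun j => MeasurableSet.iInter fun _ =>
      measurableSet_lt (measurable_pi_apply j) (measurable_pi_apply k)
  set π : Measure (ι → ℝ) := Measure.pi (fun j => μ.map (f j)) with hπ
  haveI : ∀ j, IsProbabilityMeasure (μ.map (f j)) :=
    fun j => Measure.isProbabilityMeasure_map (hmeas j).aemeasurable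
  haveI : ∀ j, SigmaFinite (μ.map (f j)) := fun j => inferInstance
  have hmap := myMapPi μ f hmeas hindep
  have hE : ∀ k, {ω | ∀ j, j ≠ k → f j ω < f k ω} = (fun ω (j : ι) => f j ω) ⁻¹' T k := by
    intro k; ext ω; simp [hT]
  have hEmeas : ∀ k, MeasurableSet {ω | ∀ j, j ≠ k → f j ω < f k ω} := by
    intro k; rw [hE]
    exact (measurable_pi_lambda _ hmeas) (hTmeas k)
  have hμE : ∀ k, μ {ω | ∀ j, j ≠ k → f j ω < f k ω} = π (T k) := by
    intro k
    rw [hE, ← Measure.map_apply (measurable_pi_lambda _ hmeas) (hTmeas k), hmap]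
  -- symmetry: π (T k) = π (T k') for all k k'
  have hsym : ∀ k k' : ι, π (T k) = π (T k') := by
    intro k k'
    set σ : ι ≃ ι := Equiv.swap k k' with hσ
    have hmp : MeasurePreserving (MeasurableEquiv.piCongrLeft (fun _ : ι => ℝ) σ) π π := by
      have := MeasureTheory.measurePreserving_piCongrLeft (fun j => μ.map (f j)) σ
      have hfun : (fun j => μ.map (f (σ j))) = fun j => μ.map (f j) := funext fun j => hid _ _
      rwa [hfun] at this
    have happ : ∀ (x : ι → ℝ) (i : ι),
        (MeasurableEquiv.piCongrLeft (fun _ : ι => ℝ) σ) x i = x (σ.symm i) := by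
      intro x i
      have := MeasurableEquiv.piCongrLeft_apply_apply σ (β := fun _ : ι => ℝ) x (σ.symm i)
      simpa using this
    have hpre : (MeasurableEquiv.piCongrLeft (fun _ : ι => ℝ) σ) ⁻¹' T k = T k' := by
      ext x
      simp only [Set.mem_preimage, hT, Set.mem_setOf_eq, happ]
      simp only [Set.mem_preimage, hT, Set.mem_setOf_eq, happ, hσ, Equiv.symm_swap]
      constructor
      · intro H j hj
        have h1 : Equiv.swap k k' j ≠ k := by
          have := (Equiv.swap k k').injective.ne hj
          rwa [Equiv.swap_apply_right] at this
        have := H _ h1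
        rwa [Equiv.swap_apply_self, Equiv.swap_apply_left] at this
      · intro H j hj
        rw [Equiv.swap_apply_left]
        have h1 : Equiv.swap k k' j ≠ k' := by
          have := (Equiv.swap k k').injective.ne hj
          rwa [Equiv.swap_apply_left] at this
        exact H _ h1
    calc π (T k) = (π.map (MeasurableEquiv.piCongrLeft (fun _ : ι => ℝ) σ)) (T k) := by
          rw [hmp.map_eq]
      _ = π ((MeasurableEquiv.piCongrLeft (fun _ : ι => ℝ) σ) ⁻¹' T k) :=
          MeasurableEquiv.map_apply _ _
      _ = π (T k') := by rw [hpre]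
  set E : ι → Set Ω := fun k => {ω | ∀ j, j ≠ k → f j ω < f k ω} with hEdef
  have hdisj : Pairwise (Function.onFun Disjoint E) := by
    intro a b hab
    refine Set.disjoint_left.mpr fun ω ha hb => ?_
    exact lt_asymm (ha b (Ne.symm hab)) (hb a hab)
  have hcompl : (⋃ k, E k)ᶜ ⊆ ⋃ (p : ι × ι), ⋃ (_ : p.1 ≠ p.2), {ω | f p.1 ω = f p.2 ω} := by
    intro ω hω
    simp only [Set.mem_compl_iff, Set.mem_iUnion, not_exists] at hω ⊢
    obtain ⟨m, hm⟩ := Finite.exists_max (fun j => f j ω)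
    have := hω m
    simp only [hEdef, Set.mem_setOf_eq, not_forall] at this
    obtain ⟨j, hj, hjm⟩ := this
    exact ⟨(j, m), hj, le_antisymm (hm j) (not_lt.mp hjm)⟩
  have hnull : μ (⋃ (p : ι × ι), ⋃ (_ : p.1 ≠ p.2), {ω | f p.1 ω = f p.2 ω}) = 0 :=
    measure_iUnion_null fun p => measure_iUnion_null fun hp => hdist _ _ hp
  have hcomplnull : μ (⋃ k, E k)ᶜ = 0 := measure_mono_null hcompl hnull
  have hunion : μ (⋃ k, E k) = 1 :=
    (prob_compl_eq_zero_iff (MeasurableSet.iUnion hEmeas)).mp hcomplnull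
  have hsum : ∑ k' : ι, μ (E k') = 1 := by
    rw [← hunion, measure_iUnion hdisj hEmeas, tsum_fintype]
  have hconst : ∀ k' : ι, μ (E k') = μ (E k) := fun k' => by
    rw [hμE, hμE, hsym k' k]
  have hcard : (Fintype.card ι : ℝ≥0∞) * μ (E k) = 1 := by
    rw [← hsum, Finset.sum_congr rfl fun k' _ => hconst k', Finset.sum_const]
    rw [nsmul_eq_mul, Fintype.card]
  have hne : (Fintype.card ι : ℝ≥0∞) ≠ 0 := by
    simp [Fintype.card_ne_zero]
  have htop : (Fintype.card ι : ℝ≥0∞) ≠ ⊤ := ENNReal.natCast_ne_top _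
  calc μ (E k) = ((Fintype.card ι : ℝ≥0∞)⁻¹ * (Fintype.card ι : ℝ≥0∞)) * μ (E k) := by
        rw [ENNReal.inv_mul_cancel hne htop, one_mul]
    _ = (Fintype.card ι : ℝ≥0∞)⁻¹ * ((Fintype.card ι : ℝ≥0∞) * μ (E k)) := mul_assoc _ _ _
    _ = (Fintype.card ι : ℝ≥0∞)⁻¹ := by rw [hcard, mul_one]

theorem expected_removed_clients {F C Ω : Type*} [Fintype F] [Fintype C] [Nonempty F]
    [MeasurableSpace Ω] (μ : Measure Ω) [IsProbabilityMeasure μ]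
    (A : F → C → Prop) (r : F → Ω → ℝ)
    (hmeas : ∀ i, Measurable (r i))
    (hindep : iIndepFun r μ)
    (hunif : ∀ i, μ.map (r i) = volume.restrict (Set.Icc (0 : ℝ) 1))
    (hdistinct : ∀ i i' : F, i ≠ i' → μ {ω | r i ω = r i' ω} = 0) :
    (∫ ω, (∑ i : F, if selected A r i ω then (degFac A i : ℝ) else 0) ∂μ)
        = ∑ i : F, (degFac A i : ℝ) / (degGF A i + 1) ∧
      (∑ i : F, (degFac A i : ℝ)) / (Fintype.card F)
        ≤ ∑ i : F, (degFac A i : ℝ) / (degGF A i + 1) := by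
  have hN : ∀ i : F, i ∉ Finset.univ.filter (facNbr A i) := by
    intro i hi
    exact (Finset.mem_filter.mp hi).2.1 rfl
  set S : F → Finset F := fun i => insert i (Finset.univ.filter (facNbr A i)) with hS
  have hcardS : ∀ i, (S i).card = degGF A i + 1 := fun i =>
    Finset.card_insert_of_notMem (hN i)
  -- probability of selection
  have hprob : ∀ i : F, μ {ω | selected A r i ω} = ((degGF A i + 1 : ℕ) : ℝ≥0∞)⁻¹ := by
    intro i
    haveI : Nonempty ↥(S i) := ⟨⟨i, Finset.mem_insert_self _ _⟩⟩
    set k : ↥(S i) := ⟨i, Finset.mem_insert_self _ _⟩ with hk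
    have hindep' : iIndepFun (fun j : ↥(S i) => r ↑j) μ :=
      myIndep_comp_right hindep Subtype.val_injective
    have key := myMaxProb μ (fun j : ↥(S i) => r ↑j) (fun j => hmeas ↑j) hindep'
      (fun j j' => by rw [hunif, hunif])
      (fun j j' hjj' => hdistinct ↑j ↑j' (fun h => hjj' (Subtype.ext h))) k
    have hsel : {ω | selected A r i ω}
        = {ω | ∀ j : ↥(S i), j ≠ k → r ↑j ω < r ↑k ω} := by
      ext ω
      simp only [Set.mem_setOf_eq, selected]
      constructor
      · intro h j hj
        have hne : (j : F) ≠ i := fun hc => hj (Subtype.ext hc)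
        have hmem : (j : F) ∈ S i := j.2
        rcases Finset.mem_insert.mp hmem with hc | hmem
        · exact absurd hc hne
        · exact h ↑j (Finset.mem_filter.mp hmem).2
      · intro h i' hnbr
        have hmem : i' ∈ S i :=
          Finset.mem_insert_of_mem (Finset.mem_filter.mpr ⟨Finset.mem_univ _, hnbr⟩)
        exact h ⟨i', hmem⟩ (fun hc => hnbr.1 (congrArg Subtype.val hc))
    rw [hsel, key, Fintype.card_coe, hcardS]
  have hmeasSel : ∀ i : F, MeasurableSet {ω | selected A r i ω} := by
    intro i
    have : {ω | selected A r i ω}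
        = ⋂ i', ⋂ (_ : facNbr A i i'), {ω | r i' ω < r i ω} := by
      ext ω; simp [selected]
    rw [this]
    exact MeasurableSet.iInter fun i' => MeasurableSet.iInter fun _ =>
      measurableSet_lt (hmeas i') (hmeas i)
  have hindfun : ∀ i : F, (fun ω => if selected A r i ω then (degFac A i : ℝ) else 0)
      = Set.indicator {ω | selected A r i ω} (fun _ => (degFac A i : ℝ)) := by
    intro i; funext ω; simp [Set.indicator_apply]
  have hint : ∀ i : F,
      Integrable (fun ω => if selected A r i ω then (degFac A i : ℝ) else 0) μ := by
    intro i; rw [hindfun i]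
    exact (integrable_const _).indicator (hmeasSel i)
  have hpart1 : (∫ ω, (∑ i : F, if selected A r i ω then (degFac A i : ℝ) else 0) ∂μ)
      = ∑ i : F, (degFac A i : ℝ) / (degGF A i + 1) := by
    rw [integral_finset_sum _ (fun i _ => hint i)]
    refine Finset.sum_congr rfl fun i _ => ?_
    rw [hindfun i, integral_indicator_const _ (hmeasSel i), measureReal_def, hprob i]
    rw [ENNReal.toReal_inv]
    simp only [ENNReal.toReal_natCast, smul_eq_mul]
    push_cast
    rw [inv_mul_eq_div]
  refine ⟨hpart1, ?_⟩
  have hle : ∀ i : F, (degGF A i : ℝ) + 1 ≤ Fintype.card F := by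
    intro i
    have h1 : degGF A i + 1 ≤ Fintype.card F := by
      have h2 : Finset.univ.filter (facNbr A i) ⊆ Finset.univ.erase i :=
        Finset.subset_erase.mpr ⟨Finset.filter_subset _ _, hN i⟩
      have h3 := Finset.card_le_card h2
      rw [Finset.card_erase_of_mem (Finset.mem_univ i)] at h3
      have h4 : 1 ≤ Finset.univ.card := Finset.card_pos.mpr ⟨i, Finset.mem_univ i⟩
      calc degGF A i + 1 ≤ (Finset.univ.card - 1) + 1 := by
            exact Nat.add_le_add_right h3 1
        _ = Finset.univ.card := Nat.succ_pred_eq_of_pos h4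
        _ = Fintype.card F := rfl
    exact_mod_cast h1
  rw [Finset.sum_div]
  refine Finset.sum_le_sum fun i _ => ?_
  apply div_le_div_of_nonneg_left (Nat.cast_nonneg _) (by positivity) (hle i)
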